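/- If f : X → X is a measurable map of a compact metric space preserving a Borel probability measure μ, then the set of points that are not recurrent (i.e., points x that are not limit points of (fᵏ(x))ₖ≥₁) has μ-measure zero. -/

import Mathlib

open Set Filter Topology MeasureTheory

theorem ae_recurrent {X : Type*} [MetricSpace X] [CompactSpace X]
    [MeasurableSpace X] [BorelSpace X]
    (μ : Measure X) [IsProbabilityMeasure μ] (f : X → X) (hf : Measurable f)
    (hpres : ∀ A : Set X, MeasurableSet A → μ (f ⁻¹' A) = μ A) :
    μ {x : X | ¬ MapClusterPt x atTop (fun k : ℕ => f^[k + 1] x)} = 0 := by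
  have hmp : MeasurePreserving f μ μ := by
    refine ⟨hf, ?_⟩
    ext A hA
    rw [Measure.map_apply hf hA, hpres A hA]
  have hcons := hmp.conservative
  have h := hcons.ae_frequently_mem_of_mem_nhds
  rw [← ae_iff]
  filter_upwards [h] with x hx
  rw [mapClusterPt_iff_frequently]
  intro s hs
  have hxs := hx s hs
  rw [Nat.frequently_atTop_iff_infinite] at hxs ⊢
  have h2 : {n | f^[n] x ∈ s ∧ 1 ≤ n}.Infinite :=
    (hxs.diff (finite_le_nat 0)).mono (by intro n hn; refine ⟨hn.1, Nat.one_le_iff_ne_zero.2 ?_⟩; simpa using hn.2)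
  exact (h2.image ((fun a ha b hb h => by simp only [Set.mem_setOf_eq] at ha hb; have h2 : a - 1 = b - 1 := h; omega : Set.InjOn (· - 1) {n | f^[n] x ∈ s ∧ 1 ≤ n}))).mono
    (by rintro m ⟨n, ⟨hn, h1⟩, rfl⟩; show f^[n - 1 + 1] x ∈ s; rw [Nat.sub_add_cancel h1]; exact hn)
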